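/- arXiv:2604.12433 — 2 statements merged into one kernel-verified Lean document; each statement's English description precedes it below -/
import Mathlib

section
/- Let M be a nonsingular square matrix over a field indexed by a finite set V. Define P_{τδτ}(M,z) = Σ_{A⊆V} z^{rank(M) − corank((M+I_A)[A])} and P_τ(N,z) = Σ_{A⊆V} z^{rank(N+I_A)}. Then P_{τδτ}(M, z) = P_τ(M⁻¹, z). -/
set_option maxHeartbeats 1000000

open Matrix Polynomial

/-- Principal submatrix of `M` on the index set `A`. -/
def psub {V F : Type*} [Fintype V] [DecidableEq V] [Field F]
    (M : Matrix V V F) (A : Finset V) : Matrix A A F :=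
  M.submatrix (fun a => a.1) (fun a => a.1)

/-- Diagonal 0/1 matrix with 1's exactly at positions in `A`. -/
def indDiag {V F : Type*} [Fintype V] [DecidableEq V] [Field F]
    (A : Finset V) : Matrix V V F :=
  Matrix.diagonal (fun v => if v ∈ A then (1 : F) else 0)

section aux

variable {V F : Type*} [Fintype V] [DecidableEq V] [Field F]

lemma indDiag_mulVec (A : Finset V) (x : V → F) :
    (indDiag A : Matrix V V F) *ᵥ x = fun v => if v ∈ A then x v else 0 := by
  funext v
  simp [indDiag, Matrix.mulVec_diagonal, ite_mul]

lemma mulVec_ext (M : Matrix V V F) (A : Finset V) (x : V → F) (i : V) :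
    (M *ᵥ fun v => if v ∈ A then x v else 0) i = ∑ j : A, M i j * x j := by
  simp [Matrix.mulVec, dotProduct, mul_ite, Finset.sum_ite_mem,
    Finset.sum_attach A (fun j => M i j * x j)]

lemma psub_mulVec (M : Matrix V V F) (A : Finset V) (y : A → F) (i : A) :
    ((psub (M + indDiag A) A) *ᵥ y) i = (∑ j : A, M i j * y j) + y i := by
  classical
  simp only [psub, Matrix.mulVec, dotProduct, Matrix.submatrix_apply, Matrix.add_apply,
    indDiag, Matrix.diagonal_apply, add_mul]
  rw [Finset.sum_add_distrib]
  congr 1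
  rw [Finset.sum_eq_single i]
  · simp [i.2]
  · intro j _ hj
    have hne : (i : V) ≠ (j : V) := fun h => hj (Subtype.ext h.symm)
    rw [if_neg hne, zero_mul]
  · simp

/-- extension of a vector on `A` by zero -/
noncomputable def extV {F : Type*} [Field F] {V : Type*} [DecidableEq V] (A : Finset V)
    (y : A → F) : V → F := fun v => if h : v ∈ A then y ⟨v, h⟩ else 0

lemma ite_extV {V : Type*} [DecidableEq V] (A : Finset V) (y : A → F) :
    (fun v => if v ∈ A then extV A y v else 0) = extV A y := by
  funext v
  by_cases h : v ∈ A <;> simp [extV, h]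

lemma mulVec_extV (M : Matrix V V F) (A : Finset V) (y : A → F) (i : V) :
    (M *ᵥ extV A y) i = ∑ j : A, M i j * y j := by
  rw [← ite_extV A y]
  rw [mulVec_ext M A (extV A y) i]
  congr 1
  funext j
  simp [extV, j.2]

lemma mem_kerN (M : Matrix V V F) (A : Finset V) (x : V → F) :
    x ∈ LinearMap.ker ((1 + M * indDiag A : Matrix V V F).mulVecLin) ↔
      ∀ v, x v + (M *ᵥ fun w => if w ∈ A then x w else 0) v = 0 := by
  rw [LinearMap.mem_ker, Matrix.mulVecLin_apply, Matrix.add_mulVec, Matrix.one_mulVec,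
    ← Matrix.mulVec_mulVec, indDiag_mulVec, funext_iff]
  simp [Pi.add_apply]

lemma mem_kerP (M : Matrix V V F) (A : Finset V) (y : A → F) :
    y ∈ LinearMap.ker ((psub (M + indDiag A) A).mulVecLin) ↔
      ∀ i : A, (∑ j : A, M i j * y j) + y i = 0 := by
  rw [LinearMap.mem_ker, Matrix.mulVecLin_apply, funext_iff]
  exact forall_congr' fun i => by rw [psub_mulVec M A y i]; simp

/-- Kernel equivalence: `ker (1 + M * indDiag A)` ≃ `ker (psub (M + indDiag A) A)`. -/
noncomputable def kerEquiv (M : Matrix V V F) (A : Finset V) :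
    LinearMap.ker ((1 + M * indDiag A : Matrix V V F).mulVecLin) ≃ₗ[F]
      LinearMap.ker ((psub (M + indDiag A) A).mulVecLin) where
  toFun x := ⟨fun i => x.1 i, by
    rw [mem_kerP]
    intro i
    have h1 := (mem_kerN M A x.1).mp x.2 (i : V)
    rw [mulVec_ext M A x.1 i] at h1
    linear_combination h1⟩
  map_add' x y := by ext i; simp
  map_smul' c x := by ext i; simp
  invFun y := ⟨-(M *ᵥ extV A y.1), by
    have hy := (mem_kerP M A y.1).mp y.2
    have hval : ∀ i : A, (-(M *ᵥ extV A y.1)) (i : V) = y.1 i := by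
      intro i
      rw [Pi.neg_apply, mulVec_extV M A y.1 i]
      linear_combination -(hy i)
    rw [mem_kerN]
    intro v
    have hD : (fun w => if w ∈ A then (-(M *ᵥ extV A y.1)) w else 0) = extV A y.1 := by
      funext w
      by_cases h : w ∈ A
      · simpa [h, extV] using hval ⟨w, h⟩
      · simp [h, extV]
    rw [hD]
    simp⟩
  left_inv x := by
    ext v
    have h1 := (mem_kerN M A x.1).mp x.2 v
    have hext : extV A (fun i : A => x.1 i) = fun w => if w ∈ A then x.1 w else 0 := by
      funext w
      by_cases h : w ∈ A <;> simp [extV, h]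
    simp only [Pi.neg_apply, hext]
    linear_combination -h1
  right_inv y := by
    ext i
    have hy := (mem_kerP M A y.1).mp y.2
    simp only [Pi.neg_apply]
    rw [mulVec_extV M A y.1 i]
    linear_combination -(hy i)

lemma rank_key (M : Matrix V V F) (hM : IsUnit M) (A : Finset V) :
    (M⁻¹ + indDiag A).rank = Fintype.card V - A.card + (psub (M + indDiag A) A).rank := by
  classical
  have hdet : IsUnit M.det := (Matrix.isUnit_iff_isUnit_det M).mp hM
  have h1 : (M⁻¹ + indDiag A).rank = (1 + M * indDiag A : Matrix V V F).rank := by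
    rw [← Matrix.rank_mul_eq_right_of_isUnit_det M _ hdet]
    congr 1
    rw [mul_add, Matrix.mul_nonsing_inv M hdet]
  have hrn1 := ((1 + M * indDiag A : Matrix V V F).mulVecLin).finrank_range_add_finrank_ker
  have hrn2 := ((psub (M + indDiag A) A).mulVecLin).finrank_range_add_finrank_ker
  have hker : Module.finrank F (LinearMap.ker ((1 + M * indDiag A : Matrix V V F).mulVecLin))
      = Module.finrank F (LinearMap.ker ((psub (M + indDiag A) A).mulVecLin)) :=
    (kerEquiv M A).finrank_eq
  rw [Module.finrank_pi] at hrn1 hrn2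
  rw [Fintype.card_coe] at hrn2
  have e1 : (1 + M * indDiag A : Matrix V V F).rank
      = Module.finrank F (LinearMap.range ((1 + M * indDiag A : Matrix V V F).mulVecLin)) := rfl
  have e2 : (psub (M + indDiag A) A).rank
      = Module.finrank F (LinearMap.range ((psub (M + indDiag A) A).mulVecLin)) := rfl
  have hle : A.card ≤ Fintype.card V := A.card_le_univ.trans_eq (by simp)
  rw [h1, e1, e2]
  omega

end aux

theorem partialTauDeltaTau_eq_partialTau_inv
    {V F : Type*} [Fintype V] [DecidableEq V] [Field F]
    (M : Matrix V V F) (hM : IsUnit M) :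
    (∑ A : Finset V, (X : Polynomial ℤ) ^
        (M.rank - (A.card - (psub (M + indDiag A) A).rank))) =
      ∑ A : Finset V, (X : Polynomial ℤ) ^ (M⁻¹ + indDiag A).rank := by
  refine Finset.sum_congr rfl fun A _ => ?_
  congr 1
  rw [Matrix.rank_of_isUnit M hM, rank_key M hM A]
  have h1 : (psub (M + indDiag A) A).rank ≤ A.card := by
    simpa [Fintype.card_coe] using (psub (M + indDiag A) A).rank_le_card_width
  have h2 : A.card ≤ Fintype.card V := A.card_le_univ.trans_eq (by simp)
  omega
end

section
/- Let M be a square matrix over a field indexed by V = V₁ ⊔ V₂ (disjoint union) that is block-diagonal with respect to this partition, i.e., M[u,v] = 0 whenever u,v lie in different parts. Then the partial-⟨δ⟩ polynomial satisfies P_δ(M,z) = P_δ(M[V₁],z) · P_δ(M[V₂],z), where P_δ(N,z) = Σ_{A ⊆ index set} z^{rank(N[A]) + rank(N[A^c])}. -/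
open Matrix Polynomial

/-- The partial-⟨δ⟩ polynomial of a square matrix. -/
noncomputable def partialDelta {V F : Type*} [Fintype V] [DecidableEq V] [Field F]
    (M : Matrix V V F) : Polynomial ℤ :=
  ∑ A : Finset V, (X : Polynomial ℤ) ^ ((psub M A).rank + (psub M (Finset.univ \ A)).rank)

theorem range_prodMap' {R M M₂ M₃ M₄ : Type*} [CommRing R] [AddCommGroup M] [AddCommGroup M₂]
    [AddCommGroup M₃] [AddCommGroup M₄] [Module R M] [Module R M₂] [Module R M₃] [Module R M₄]
    (f : M →ₗ[R] M₂) (g : M₃ →ₗ[R] M₄) :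
    LinearMap.range (f.prodMap g) = (LinearMap.range f).prod (LinearMap.range g) := by
  ext ⟨a, b⟩
  simp only [LinearMap.mem_range, Submodule.mem_prod, Prod.ext_iff]
  constructor
  · rintro ⟨⟨x, y⟩, h1, h2⟩; exact ⟨⟨x, h1⟩, ⟨y, h2⟩⟩
  · rintro ⟨⟨x, h1⟩, ⟨y, h2⟩⟩; exact ⟨(x, y), h1, h2⟩

/-- A product of submodules is linearly equivalent to the product of the submodules. -/
noncomputable def prodSubmoduleEquiv {R M M₂ : Type*} [CommRing R] [AddCommGroup M]
    [AddCommGroup M₂] [Module R M] [Module R M₂] (p : Submodule R M) (q : Submodule R M₂) :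
    (p.prod q) ≃ₗ[R] p × q where
  toFun x := (⟨x.1.1, x.2.1⟩, ⟨x.1.2, x.2.2⟩)
  invFun x := ⟨(x.1.1, x.2.1), x.1.2, x.2.2⟩
  left_inv _ := rfl
  right_inv _ := rfl
  map_add' _ _ := rfl
  map_smul' _ _ := rfl

theorem finrank_prod_submodule {F M M₂ : Type*} [Field F] [AddCommGroup M] [AddCommGroup M₂]
    [Module F M] [Module F M₂] [FiniteDimensional F M] [FiniteDimensional F M₂]
    (p : Submodule F M) (q : Submodule F M₂) :
    Module.finrank F (p.prod q) = Module.finrank F p + Module.finrank F q := by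
  rw [(prodSubmoduleEquiv p q).finrank_eq, Module.finrank_prod]

theorem rank_fromBlocks_zero {m n F : Type*} [Fintype m] [Fintype n] [DecidableEq m]
    [DecidableEq n] [Field F] (A : Matrix m m F) (D : Matrix n n F) :
    (fromBlocks A 0 0 D).rank = A.rank + D.rank := by
  classical
  set e := LinearEquiv.sumArrowLequivProdArrow m n F F
  have key : (fromBlocks A 0 0 D).mulVecLin =
      (e.symm : (m → F) × (n → F) →ₗ[F] (m ⊕ n → F)) ∘ₗ
        (A.mulVecLin.prodMap D.mulVecLin) ∘ₗ (e : (m ⊕ n → F) →ₗ[F] (m → F) × (n → F)) := by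
    apply LinearMap.ext
    intro x
    have hx : x = Sum.elim (x ∘ Sum.inl) (x ∘ Sum.inr) := by
      funext i; cases i <;> rfl
    simp only [LinearMap.comp_apply, LinearEquiv.coe_coe]
    rw [show (e x) = (x ∘ Sum.inl, x ∘ Sum.inr) from rfl]
    funext i
    cases i with
    | inl i =>
      simp [e, LinearEquiv.sumArrowLequivProdArrow, mulVecLin_apply]
      conv_lhs => rw [hx]
      simp [fromBlocks_mulVec]
    | inr i =>
      simp [e, LinearEquiv.sumArrowLequivProdArrow, mulVecLin_apply]
      conv_lhs => rw [hx]
      simp [fromBlocks_mulVec]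
  rw [Matrix.rank, key]
  rw [LinearMap.range_comp, LinearMap.range_comp_of_range_eq_top _ (LinearEquiv.range e)]
  rw [LinearEquiv.finrank_map_eq, range_prodMap', finrank_prod_submodule]
  rfl

/-- The subtype of a finset of a sum type is equivalent to the sum of the subtypes
of its left and right parts. -/
def finsetSumEquiv {V₁ V₂ : Type*} (A : Finset (V₁ ⊕ V₂)) :
    (↥A.toLeft ⊕ ↥A.toRight) ≃ ↥A :=
  (Equiv.sumCongr (Equiv.subtypeEquivRight fun _ => Finset.mem_toLeft)
    (Equiv.subtypeEquivRight fun _ => Finset.mem_toRight)).trans Equiv.subtypeSum.symm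

theorem rank_psub_sum {V₁ V₂ F : Type*} [Fintype V₁] [DecidableEq V₁] [Fintype V₂]
    [DecidableEq V₂] [Field F]
    (M : Matrix (V₁ ⊕ V₂) (V₁ ⊕ V₂) F)
    (h₁₂ : ∀ (u : V₁) (v : V₂), M (Sum.inl u) (Sum.inr v) = 0)
    (h₂₁ : ∀ (u : V₂) (v : V₁), M (Sum.inr u) (Sum.inl v) = 0)
    (A : Finset (V₁ ⊕ V₂)) :
    (psub M A).rank = (psub (M.submatrix Sum.inl Sum.inl) A.toLeft).rank
      + (psub (M.submatrix Sum.inr Sum.inr) A.toRight).rank := by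
  have h : (psub M A).submatrix (finsetSumEquiv A) (finsetSumEquiv A) =
      fromBlocks (psub (M.submatrix Sum.inl Sum.inl) A.toLeft) 0 0
        (psub (M.submatrix Sum.inr Sum.inr) A.toRight) := by
    ext x y
    cases x with
    | inl a => cases y with
      | inl b => rfl
      | inr b => exact h₁₂ a.1 b.1
    | inr a => cases y with
      | inl b => exact h₂₁ a.1 b.1
      | inr b => rfl
  rw [← rank_submatrix (psub M A) (finsetSumEquiv A) (finsetSumEquiv A), h,
    rank_fromBlocks_zero]

theorem toLeft_compl {V₁ V₂ : Type*} [Fintype V₁] [DecidableEq V₁] [Fintype V₂] [DecidableEq V₂]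
    (A : Finset (V₁ ⊕ V₂)) :
    (Finset.univ \ A).toLeft = Finset.univ \ A.toLeft := by
  ext x; simp

theorem toRight_compl {V₁ V₂ : Type*} [Fintype V₁] [DecidableEq V₁] [Fintype V₂] [DecidableEq V₂]
    (A : Finset (V₁ ⊕ V₂)) :
    (Finset.univ \ A).toRight = Finset.univ \ A.toRight := by
  ext x; simp

/-- Finsets of a sum type are equivalent to pairs of finsets. -/
def finsetSumProdEquiv {V₁ V₂ : Type*} : Finset (V₁ ⊕ V₂) ≃ Finset V₁ × Finset V₂ where
  toFun A := (A.toLeft, A.toRight)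
  invFun p := p.1.disjSum p.2
  left_inv A := Finset.toLeft_disjSum_toRight
  right_inv p := by simp

theorem partialDelta_blockDiagonal
    {V₁ V₂ F : Type*} [Fintype V₁] [DecidableEq V₁] [Fintype V₂] [DecidableEq V₂] [Field F]
    (M : Matrix (V₁ ⊕ V₂) (V₁ ⊕ V₂) F)
    (h₁₂ : ∀ (u : V₁) (v : V₂), M (Sum.inl u) (Sum.inr v) = 0)
    (h₂₁ : ∀ (u : V₂) (v : V₁), M (Sum.inr u) (Sum.inl v) = 0) :
    partialDelta M =
      partialDelta (M.submatrix Sum.inl Sum.inl) * partialDelta (M.submatrix Sum.inr Sum.inr) := by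
  rw [partialDelta, partialDelta, partialDelta, Finset.sum_mul_sum]
  rw [← Fintype.sum_prod_type']
  rw [Fintype.sum_equiv finsetSumProdEquiv _
    (fun p => (X : Polynomial ℤ) ^
        ((psub (M.submatrix Sum.inl Sum.inl) p.1).rank
          + (psub (M.submatrix Sum.inl Sum.inl) (Finset.univ \ p.1)).rank)
      * (X : Polynomial ℤ) ^
        ((psub (M.submatrix Sum.inr Sum.inr) p.2).rank
          + (psub (M.submatrix Sum.inr Sum.inr) (Finset.univ \ p.2)).rank))]
  intro A
  rw [rank_psub_sum M h₁₂ h₂₁ A, rank_psub_sum M h₁₂ h₂₁ (Finset.univ \ A),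
    toLeft_compl, toRight_compl, ← pow_add]
  simp only [finsetSumProdEquiv, Equiv.coe_fn_mk]
  ac_rfl
end
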